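/- Let R be a finite (commutative) ring and A a subgroup of its group of units. Then there exist t ≤ ⌈|R|/|A|⌉ elements a_1,...,a_t of A (repetitions allowed) with a_1 + ... + a_t = 0. -/

import Mathlib

open Finset Pointwise
set_option linter.unusedSectionVars false
namespace ZeroSumAux

variable {G : Type*} [AddCommGroup G] [DecidableEq G] [Fintype G]

def gam (S X : Finset G) : Finset G := X ∪ (X + S)

def bnd (S X : Finset G) : ℕ := (gam S X).card - X.card

def IsFrag (V S X : Finset G) : Prop := X.Nonempty ∧ X ⊆ V ∧ gam S X ≠ V

noncomputable def kap (V S : Finset G) : ℕ := sInf (bnd S '' {X | IsFrag V S X})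

noncomputable def alp (V S : Finset G) : ℕ :=
  sInf (Finset.card '' {X | IsFrag V S X ∧ bnd S X = kap V S})

lemma subset_gam (S X : Finset G) : X ⊆ gam S X := subset_union_left

lemma card_gam (S X : Finset G) : (gam S X).card = X.card + bnd S X :=
  (Nat.add_sub_cancel' (card_le_card (subset_gam S X))).symm

lemma gam_mono (S : Finset G) {X Y : Finset G} (h : X ⊆ Y) : gam S X ⊆ gam S Y :=
  union_subset_union h (add_subset_add_right h)

lemma gam_subset_V {V S X : Finset G} (hX : X ⊆ V) (hVS : V + S ⊆ V) : gam S X ⊆ V :=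
  union_subset hX ((add_subset_add_right hX).trans hVS)

lemma gam_union (S X Y : Finset G) : gam S (X ∪ Y) = gam S X ∪ gam S Y := by
  unfold gam
  rw [Finset.union_add]
  ac_rfl

lemma gam_inter_subset (S X Y : Finset G) : gam S (X ∩ Y) ⊆ gam S X ∩ gam S Y :=
  subset_inter (gam_mono S inter_subset_left) (gam_mono S inter_subset_right)

lemma isFrag_inter {V S X Y : Finset G} (hVS : V + S ⊆ V) (hX : IsFrag V S X)
    (hne : (X ∩ Y).Nonempty) : IsFrag V S (X ∩ Y) := by
  refine ⟨hne, inter_subset_left.trans hX.2.1, fun hg => hX.2.2 ?_⟩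
  have h1 : gam S (X ∩ Y) ⊆ gam S X := gam_mono S inter_subset_left
  rw [hg] at h1
  exact subset_antisymm (gam_subset_V hX.2.1 hVS) h1

lemma kap_le {V S X : Finset G} (hX : IsFrag V S X) : kap V S ≤ bnd S X :=
  Nat.sInf_le ⟨X, hX, rfl⟩

lemma alp_le {V S X : Finset G} (hX : IsFrag V S X) (hb : bnd S X = kap V S) :
    alp V S ≤ X.card :=
  Nat.sInf_le ⟨X, ⟨hX, hb⟩, rfl⟩

/-- existence of an atom -/
lemma exists_atom {V S : Finset G} (hne : ∃ X, IsFrag V S X) :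
    ∃ X : Finset G, IsFrag V S X ∧ bnd S X = kap V S ∧ X.card = alp V S := by
  obtain ⟨X₀, hX₀⟩ := hne
  have h1 : (bnd S '' {X | IsFrag V S X}).Nonempty := ⟨_, X₀, hX₀, rfl⟩
  obtain ⟨X₁, hX₁, hb₁⟩ := Nat.sInf_mem h1
  have h2 : (Finset.card '' {X | IsFrag V S X ∧ bnd S X = kap V S}).Nonempty :=
    ⟨_, X₁, ⟨hX₁, hb₁⟩, rfl⟩
  obtain ⟨X, ⟨hX, hb⟩, hc⟩ := Nat.sInf_mem h2
  exact ⟨X, hX, hb, hc⟩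

/-- duality: the complement (in V) of the closed neighborhood of an `S`-fragment is a
`-S`-fragment with at most the same boundary. -/
lemma dual_frag {V S X : Finset G} (hVS : V + S ⊆ V) (hVS' : V + -S ⊆ V)
    (hX : IsFrag V S X) :
    IsFrag V (-S) (V \ gam S X) ∧ bnd (-S) (V \ gam S X) ≤ bnd S X := by
  set Y := V \ gam S X with hY
  have hgV : gam S X ⊆ V := gam_subset_V hX.2.1 hVS
  have hYne : Y.Nonempty := by
    rw [hY, sdiff_nonempty]
    intro h
    exact hX.2.2 (subset_antisymm hgV h)
  have hYV : Y ⊆ V := sdiff_subset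
  -- gam (-S) Y avoids X
  have hdisj : ∀ x ∈ gam (-S) Y, x ∉ X := by
    intro x hx hxX
    rcases mem_union.mp hx with h | h
    · exact (mem_sdiff.mp h).2 (subset_gam S X (by exact hxX))
    · obtain ⟨w, hw, t, ht, rfl⟩ := mem_add.mp h
      obtain ⟨s, hs, rfl⟩ := mem_neg.mp ht
      -- w + (-s) ∈ X, so w = (w + -s) + s ∈ X + S
      have : w ∈ X + S := by
        have : (w + -s) + s = w := by abel
        rw [← this]
        exact add_mem_add hxX hs
      exact (mem_sdiff.mp hw).2 (mem_union_right _ this)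
  have hgYV : gam (-S) Y ⊆ V := gam_subset_V hYV hVS'
  have hgYsub : gam (-S) Y ⊆ V \ X := fun x hx =>
    mem_sdiff.mpr ⟨hgYV hx, hdisj x hx⟩
  have hfrag : IsFrag V (-S) Y := by
    refine ⟨hYne, hYV, fun hg => ?_⟩
    obtain ⟨x, hxX⟩ := hX.1
    have : x ∈ V \ X := hgYsub (hg ▸ hX.2.1 hxX)
    exact (mem_sdiff.mp this).2 hxX
  refine ⟨hfrag, ?_⟩
  have c1 : (gam (-S) Y).card ≤ V.card - X.card := by
    calc (gam (-S) Y).card ≤ (V \ X).card := card_le_card hgYsub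
    _ = V.card - X.card := card_sdiff_of_subset hX.2.1
  have c2 : Y.card = V.card - (gam S X).card := card_sdiff_of_subset hgV
  have c3 : X.card ≤ (gam S X).card := card_le_card (subset_gam S X)
  have c4 : (gam S X).card ≤ V.card := card_le_card hgV
  have c5 : Y.card ≤ (gam (-S) Y).card := card_le_card (subset_gam _ Y)
  have c6 : X.card ≤ V.card := card_le_card hX.2.1
  unfold bnd
  omega

lemma frag_neg_exists {V S : Finset G} (hVS : V + S ⊆ V) (hVS' : V + -S ⊆ V)
    (hne : ∃ X, IsFrag V S X) : ∃ X, IsFrag V (-S) X := by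
  obtain ⟨X, hX⟩ := hne
  exact ⟨_, (dual_frag hVS hVS' hX).1⟩

lemma kap_neg_le {V S : Finset G} (hVS : V + S ⊆ V) (hVS' : V + -S ⊆ V)
    (hne : ∃ X, IsFrag V S X) : kap V (-S) ≤ kap V S := by
  have h1 : (bnd S '' {X | IsFrag V S X}).Nonempty := by
    obtain ⟨X, hX⟩ := hne; exact ⟨_, X, hX, rfl⟩
  obtain ⟨X, hX, hb⟩ := Nat.sInf_mem h1
  have := dual_frag hVS hVS' hX
  calc kap V (-S) ≤ bnd (-S) (V \ gam S X) := kap_le this.1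
  _ ≤ bnd S X := this.2
  _ = kap V S := hb

lemma kap_neg_eq {V S : Finset G} (hVS : V + S ⊆ V) (hVS' : V + -S ⊆ V)
    (hne : ∃ X, IsFrag V S X) : kap V (-S) = kap V S := by
  refine le_antisymm (kap_neg_le hVS hVS' hne) ?_
  have h2 := kap_neg_le hVS' (by rwa [neg_neg S]) (frag_neg_exists hVS hVS' hne)
  rwa [neg_neg S] at h2

lemma submod_card (S X Y : Finset G) :
    (gam S (X ∪ Y)).card + (gam S (X ∩ Y)).card ≤ (gam S X).card + (gam S Y).card := by
  rw [gam_union]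
  have h1 := card_union_add_card_inter (gam S X) (gam S Y)
  have h2 := card_le_card (gam_inter_subset S X Y)
  omega

lemma card_add_singleton (X : Finset G) (g : G) : (X + {g}).card = X.card := by
  rw [Finset.add_singleton]
  exact Finset.card_image_of_injective _ (add_left_injective g)

lemma gam_add_singleton (S X : Finset G) (g : G) :
    gam S (X + {g}) = gam S X + {g} := by
  unfold gam
  rw [Finset.union_add]
  congr 1
  rw [add_right_comm]

lemma isFrag_translate {V S X : Finset G} (hVS : V + S ⊆ V) (hVV : V + V ⊆ V)
    {g : G} (hg : g ∈ V) (hX : IsFrag V S X) : IsFrag V S (X + {g}) := by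
  refine ⟨hX.1.add ⟨g, mem_singleton_self g⟩, ?_, ?_⟩
  · intro x hx
    obtain ⟨a, ha, b, hb, rfl⟩ := mem_add.mp hx
    rw [mem_singleton.mp hb]
    exact hVV (add_mem_add (hX.2.1 ha) hg)
  · rw [gam_add_singleton]
    intro h
    apply hX.2.2
    have hc : (gam S X).card = V.card := by rw [← h, card_add_singleton]
    exact Finset.eq_of_subset_of_card_le (gam_subset_V hX.2.1 hVS) (le_of_eq hc.symm)

lemma bnd_translate (S X : Finset G) (g : G) : bnd S (X + {g}) = bnd S X := by
  unfold bnd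
  rw [gam_add_singleton, card_add_singleton, card_add_singleton]

/-- equivariance under an additive automorphism preserving S. -/
lemma gam_image {S X : Finset G} (e : G ≃+ G) (hS : S.image e = S) :
    gam S (X.image e) = (gam S X).image e := by
  unfold gam
  rw [Finset.image_union]
  congr 1
  calc X.image ⇑e + S = X.image ⇑e + S.image ⇑e := by rw [hS]
    _ = (X + S).image ⇑e := (Finset.image_add e).symm

lemma card_image_equiv (X : Finset G) (e : G ≃+ G) : (X.image e).card = X.card :=
  Finset.card_image_of_injective _ e.injective

lemma isFrag_image {V S X : Finset G} (e : G ≃+ G) (hS : S.image e = S)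
    (hV : V.image e = V) (hX : IsFrag V S X) : IsFrag V S (X.image e) := by
  refine ⟨hX.1.image e, ?_, ?_⟩
  · rw [← hV]; exact Finset.image_subset_image hX.2.1
  · rw [gam_image e hS]
    intro h
    apply hX.2.2
    have := congrArg (Finset.image e.symm) h
    rw [Finset.image_image] at this
    have h2 : (gam S X).image (⇑e.symm ∘ ⇑e) = gam S X := by
      rw [show ⇑e.symm ∘ ⇑e = id from funext fun x => e.symm_apply_apply x, Finset.image_id]
    rw [h2] at this
    rw [this, ← hV, Finset.image_image,
      show ⇑e.symm ∘ ⇑e = id from funext fun x => e.symm_apply_apply x, Finset.image_id]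
    exact hV.symm

lemma bnd_image (S X : Finset G) (e : G ≃+ G) (hS : S.image e = S) :
    bnd S (X.image e) = bnd S X := by
  unfold bnd
  rw [gam_image e hS, card_image_equiv, card_image_equiv]


/-- Two atoms that intersect are equal (given the atom-size comparison). -/
theorem atoms_eq {V S X Y : Finset G} (hVS : V + S ⊆ V) (hVS' : V + -S ⊆ V)
    (hfr : ∃ Z, IsFrag V S Z)
    (hα : alp V S ≤ alp V (-S))
    (hX : IsFrag V S X) (hbX : bnd S X = kap V S) (hcX : X.card = alp V S)
    (hY : IsFrag V S Y) (hbY : bnd S Y = kap V S) (hcY : Y.card = alp V S)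
    (hne : (X ∩ Y).Nonempty) : X = Y := by
  have hZfrag : IsFrag V S (X ∩ Y) := isFrag_inter hVS hX hne
  have hkZ : kap V S ≤ bnd S (X ∩ Y) := kap_le hZfrag
  by_cases hW : gam S (X ∪ Y) = V
  · -- case 2 : the union's closed neighborhood is everything
    exfalso
    have e1 : (gam S (X ∪ Y)).card = V.card := by rw [hW]
    have e2 := submod_card S X Y
    have e3 : (gam S (X ∩ Y)).card = (X ∩ Y).card + bnd S (X ∩ Y) := card_gam ..
    have e4 : (gam S X).card = X.card + bnd S X := card_gam ..
    have e5 : (gam S Y).card = Y.card + bnd S Y := card_gam ..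
    -- dual fragment of X
    obtain ⟨hXd, hXdb⟩ := dual_frag hVS hVS' hX
    have hkneg : kap V (-S) = kap V S := kap_neg_eq hVS hVS' hfr
    have hXdb' : bnd (-S) (V \ gam S X) = kap V (-S) := by
      have := kap_le hXd
      omega
    have halpneg : alp V (-S) ≤ (V \ gam S X).card := alp_le hXd hXdb'
    have e6 : (V \ gam S X).card = V.card - (gam S X).card :=
      card_sdiff_of_subset (gam_subset_V hX.2.1 hVS)
    have e7 : (gam S X).card ≤ V.card := card_le_card (gam_subset_V hX.2.1 hVS)
    have e8 : 0 < (X ∩ Y).card := card_pos.mpr hne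
    omega
  · -- case 1 : the union is a fragment
    have hWfrag : IsFrag V S (X ∪ Y) := by
      refine ⟨hX.1.mono subset_union_left, union_subset hX.2.1 hY.2.1, hW⟩
    have hkW : kap V S ≤ bnd S (X ∪ Y) := kap_le hWfrag
    have e2 := submod_card S X Y
    have e3 : (gam S (X ∩ Y)).card = (X ∩ Y).card + bnd S (X ∩ Y) := card_gam ..
    have e3' : (gam S (X ∪ Y)).card = (X ∪ Y).card + bnd S (X ∪ Y) := card_gam ..
    have e4 : (gam S X).card = X.card + bnd S X := card_gam ..
    have e5 : (gam S Y).card = Y.card + bnd S Y := card_gam ..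
    have e6 := card_inter_add_card_union X Y
    have hbZ : bnd S (X ∩ Y) = kap V S := by omega
    have halpZ : alp V S ≤ (X ∩ Y).card := alp_le hZfrag hbZ
    have hZX : X ∩ Y = X :=
      Finset.eq_of_subset_of_card_le inter_subset_left (by omega)
    have hZY : X ∩ Y = Y :=
      Finset.eq_of_subset_of_card_le inter_subset_right (by omega)
    rw [← hZX, hZY]


lemma negmem_of_addclosed {H : Finset G} (hcl : ∀ x ∈ H, ∀ y ∈ H, x + y ∈ H)
    {x : G} (hx : x ∈ H) : -x ∈ H := by
  have hpow : ∀ k : ℕ, (k + 1) • x ∈ H := by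
    intro k
    induction k with
    | zero => simpa using hx
    | succ m ih =>
      have := hcl _ ih _ hx
      rwa [← succ_nsmul] at this
  rcases Nat.lt_or_ge (addOrderOf x) 2 with h | h
  · have hpos : 0 < addOrderOf x := addOrderOf_pos x
    have h1 : addOrderOf x = 1 := by omega
    have hx0 : x = 0 := AddMonoid.addOrderOf_eq_one_iff.mp h1
    rw [hx0, neg_zero, ← hx0]; exact hx
  · obtain ⟨m, hm⟩ : ∃ m : ℕ, addOrderOf x = m + 2 := ⟨addOrderOf x - 2, by omega⟩
    have h0 : addOrderOf x • x = 0 := addOrderOf_nsmul_eq_zero x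
    have : (m + 1) • x + x = 0 := by
      rw [← succ_nsmul, ← hm, h0]
    have hneg : (m + 1) • x = -x := eq_neg_of_add_eq_zero_left this
    rw [← hneg]; exact hpow m

/-- the atom at 0 is an additively closed, automorphism-invariant set. -/
theorem atom_zero_subgroup {V S : Finset G} (E : Set (G ≃+ G))
    (hVV : V + V ⊆ V) (hVneg : ∀ x ∈ V, -x ∈ V) (hSV : S ⊆ V)
    (hES : ∀ e ∈ E, S.image ⇑e = S) (hEV : ∀ e ∈ E, V.image ⇑e = V)
    (hfr : ∃ Z, IsFrag V S Z)
    (hα : alp V S ≤ alp V (-S)) :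
    ∃ H : Finset G, IsFrag V S H ∧ bnd S H = kap V S ∧ (0:G) ∈ H ∧
      (∀ x ∈ H, ∀ y ∈ H, x + y ∈ H) ∧ (∀ e ∈ E, H.image ⇑e = H) := by
  have hVS : V + S ⊆ V := (add_subset_add_left hSV).trans hVV
  have hVS' : V + -S ⊆ V := by
    refine (add_subset_add_left ?_).trans hVV
    intro x hx
    obtain ⟨s, hs, rfl⟩ := mem_neg.mp hx
    exact hVneg s (hSV hs)
  obtain ⟨X, hX, hbX, hcX⟩ := exists_atom hfr
  obtain ⟨x₀, hx₀⟩ := hX.1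
  set H := X + {-x₀} with hH
  have hx₀V : x₀ ∈ V := hX.2.1 hx₀
  have hHfrag : IsFrag V S H := isFrag_translate hVS hVV (hVneg x₀ hx₀V) hX
  have hbH : bnd S H = kap V S := by rw [hH, bnd_translate]; exact hbX
  have hcH : H.card = alp V S := by rw [hH, card_add_singleton]; exact hcX
  have h0H : (0:G) ∈ H := by
    have : x₀ + (-x₀) ∈ H := add_mem_add hx₀ (mem_singleton_self _)
    rwa [add_neg_cancel] at this
  have hcl : ∀ x ∈ H, ∀ y ∈ H, x + y ∈ H := by
    intro x hx y hy
    have hyV : y ∈ V := hHfrag.2.1 hy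
    have hfragT : IsFrag V S (H + {y}) := isFrag_translate hVS hVV hyV hHfrag
    have hbT : bnd S (H + {y}) = kap V S := by rw [bnd_translate]; exact hbH
    have hcT : (H + {y}).card = alp V S := by rw [card_add_singleton]; exact hcH
    have hmeet : (H ∩ (H + {y})).Nonempty := by
      refine ⟨y, mem_inter.mpr ⟨hy, ?_⟩⟩
      have : (0:G) + y ∈ H + {y} := add_mem_add h0H (mem_singleton_self _)
      rwa [zero_add] at this
    have := atoms_eq hVS hVS' hfr hα hHfrag hbH hcH hfragT hbT hcT hmeet
    rw [this]
    exact add_mem_add hx (mem_singleton_self _)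
  refine ⟨H, hHfrag, hbH, h0H, hcl, ?_⟩
  intro e he
  have hfragE : IsFrag V S (H.image ⇑e) := isFrag_image e (hES e he) (hEV e he) hHfrag
  have hbE : bnd S (H.image ⇑e) = kap V S := by rw [bnd_image S H e (hES e he)]; exact hbH
  have hcE : (H.image ⇑e).card = alp V S := by rw [card_image_equiv]; exact hcH
  have hmeet : (H ∩ H.image ⇑e).Nonempty := by
    refine ⟨0, mem_inter.mpr ⟨h0H, Finset.mem_image.mpr ⟨0, h0H, map_zero e⟩⟩⟩
  exact (atoms_eq hVS hVS' hfr hα hHfrag hbH hcH hfragE hbE hcE hmeet).symm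


/-- Main abstract result: either the connectivity is at least `|S|`, or there is a
nontrivial invariant "subgroup" meeting `S ∪ -S`. -/
theorem abstract_main {V S : Finset G} (E : Set (G ≃+ G))
    (hV0 : (0:G) ∈ V) (hVV : V + V ⊆ V) (hVneg : ∀ x ∈ V, -x ∈ V) (hSV : S ⊆ V)
    (hES : ∀ e ∈ E, S.image ⇑e = S) (hEV : ∀ e ∈ E, V.image ⇑e = V)
    (hfr : ∃ Z, IsFrag V S Z) :
    S.card ≤ kap V S ∨
    ∃ H : Finset G, H ⊆ V ∧ (0:G) ∈ H ∧ (∀ x ∈ H, ∀ y ∈ H, x + y ∈ H) ∧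
      (∀ e ∈ E, H.image ⇑e = H) ∧ ((H ∩ (S ∪ -S)).Nonempty) ∧ H ≠ V := by
  have hVS : V + S ⊆ V := (add_subset_add_left hSV).trans hVV
  have hnSV : -S ⊆ V := by
    intro x hx
    obtain ⟨s, hs, rfl⟩ := mem_neg.mp hx
    exact hVneg s (hSV hs)
  have hVS' : V + -S ⊆ V := (add_subset_add_left hnSV).trans hVV
  have hfr' : ∃ Z, IsFrag V (-S) Z := frag_neg_exists hVS hVS' hfr
  have hESn : ∀ e ∈ E, (-S).image ⇑e = -S := by
    intro e he
    rw [Finset.image_neg, hES e he]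
  have hkeq : kap V (-S) = kap V S := kap_neg_eq hVS hVS' hfr
  have hcard : (-S).card = S.card := Finset.card_neg S
  rcases le_total (alp V S) (alp V (-S)) with hα | hα
  · obtain ⟨H, hHfrag, hbH, h0H, hcl, hinv⟩ :=
      atom_zero_subgroup E hVV hVneg hSV hES hEV hfr hα
    by_cases hmeet : (H ∩ (S ∪ -S)).Nonempty
    · exact Or.inr ⟨H, hHfrag.2.1, h0H, hcl, hinv, hmeet,
        fun h => hHfrag.2.2 (subset_antisymm (gam_subset_V hHfrag.2.1 hVS)
          (h ▸ subset_gam S H))⟩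
    · left
      have hHS : ∀ s ∈ S, s ∉ H := by
        intro s hs hsH
        exact hmeet ⟨s, mem_inter.mpr ⟨hsH, mem_union_left _ hs⟩⟩
      -- (H + S) ∩ H = ∅
      have hdisj : Disjoint H (H + S) := by
        rw [Finset.disjoint_left]
        intro x hxH hxHS
        obtain ⟨h, hh, s, hs, rfl⟩ := mem_add.mp hxHS
        have : -h + (h + s) ∈ H := hcl _ (negmem_of_addclosed hcl hh) _ hxH
        rw [neg_add_cancel_left] at this
        exact hHS s hs this
      have hSsub : S ⊆ H + S := by
        intro s hs
        have : (0:G) + s ∈ H + S := add_mem_add h0H hs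
        rwa [zero_add] at this
      have : bnd S H = (H + S).card := by
        unfold bnd gam
        rw [Finset.card_union_of_disjoint hdisj]
        omega
      rw [← hbH, this]
      exact card_le_card hSsub
  · -- use the (-S)-digraph
    have hα' : alp V (-S) ≤ alp V (- -S) := by rwa [neg_neg]
    obtain ⟨H, hHfrag, hbH, h0H, hcl, hinv⟩ :=
      atom_zero_subgroup E hVV hVneg hnSV hESn hEV hfr' hα'
    by_cases hmeet : (H ∩ (S ∪ -S)).Nonempty
    · exact Or.inr ⟨H, hHfrag.2.1, h0H, hcl, hinv, hmeet,
        fun h => hHfrag.2.2 (subset_antisymm (gam_subset_V hHfrag.2.1 hVS')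
          (h ▸ subset_gam (-S) H))⟩
    · left
      have hHS : ∀ s ∈ -S, s ∉ H := by
        intro s hs hsH
        exact hmeet ⟨s, mem_inter.mpr ⟨hsH, mem_union_right _ hs⟩⟩
      have hdisj : Disjoint H (H + -S) := by
        rw [Finset.disjoint_left]
        intro x hxH hxHS
        obtain ⟨h, hh, s, hs, rfl⟩ := mem_add.mp hxHS
        have : -h + (h + s) ∈ H := hcl _ (negmem_of_addclosed hcl hh) _ hxH
        rw [neg_add_cancel_left] at this
        exact hHS s hs this
      have hSsub : -S ⊆ H + -S := by
        intro s hs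
        have : (0:G) + s ∈ H + -S := add_mem_add h0H hs
        rwa [zero_add] at this
      have hb : bnd (-S) H = (H + -S).card := by
        unfold bnd gam
        rw [Finset.card_union_of_disjoint hdisj]
        omega
      calc S.card = (-S).card := hcard.symm
        _ ≤ (H + -S).card := card_le_card hSsub
        _ = bnd (-S) H := hb.symm
        _ = kap V (-S) := hbH
        _ = kap V S := hkeq

end ZeroSumAux

namespace ZeroSumRing
open ZeroSumAux
open scoped Classical

variable {R : Type*} [CommRing R] [Fintype R]

/-- the subgroup as a finset of ring elements -/
noncomputable def nA (A : Subgroup Rˣ) : Finset R :=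
  (Finset.univ.filter (· ∈ A)).image (fun u : Rˣ => (u : R))

lemma mem_nA {A : Subgroup Rˣ} {x : R} :
    x ∈ nA A ↔ ∃ u : Rˣ, u ∈ A ∧ (u : R) = x := by
  simp [nA]

lemma card_nA (A : Subgroup Rˣ) : (nA A).card = Nat.card A := by
  rw [nA, Finset.card_image_of_injective _ (fun a b h => Units.ext h),
    Nat.card_eq_fintype_card]
  simp [Fintype.card_subtype]

lemma one_mem_nA (A : Subgroup Rˣ) : (1 : R) ∈ nA A :=
  mem_nA.mpr ⟨1, A.one_mem, rfl⟩

lemma zero_not_mem_nA [Nontrivial R] (A : Subgroup Rˣ) : (0 : R) ∉ nA A := by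
  rw [mem_nA]
  rintro ⟨u, -, hu⟩
  exact u.ne_zero hu

lemma mul_mem_nA {A : Subgroup Rˣ} {u : Rˣ} (hu : u ∈ A) {x : R} (hx : x ∈ nA A) :
    (u : R) * x ∈ nA A := by
  obtain ⟨v, hv, rfl⟩ := mem_nA.mp hx
  exact mem_nA.mpr ⟨u * v, A.mul_mem hu hv, rfl⟩

/-- k-fold sumsets -/
noncomputable def SAs (A : Subgroup Rˣ) : ℕ → Finset R
  | 0 => {0}
  | (k+1) => SAs A k + nA A

lemma SA_mul_mem {A : Subgroup Rˣ} {u : Rˣ} (hu : u ∈ A) :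
    ∀ k, ∀ x ∈ SAs A k, (u : R) * x ∈ SAs A k := by
  intro k
  induction k with
  | zero => intro x hx; rw [SAs, mem_singleton] at *; rw [hx, mul_zero]
  | succ m ih =>
    intro x hx
    obtain ⟨y, hy, a, ha, rfl⟩ := mem_add.mp hx
    rw [mul_add]
    exact add_mem_add (ih y hy) (mul_mem_nA hu ha)

lemma SA_add_subset (A : Subgroup Rˣ) : ∀ j k, SAs A j + SAs A k ⊆ SAs A (j + k) := by
  intro j k
  induction k with
  | zero =>
    intro x hx
    obtain ⟨y, hy, a, ha, rfl⟩ := mem_add.mp hx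
    rw [SAs, mem_singleton] at ha
    simpa [ha] using hy
  | succ m ih =>
    intro x hx
    obtain ⟨y, hy, a, ha, rfl⟩ := mem_add.mp hx
    obtain ⟨z, hz, b, hb, rfl⟩ := mem_add.mp ha
    have : y + z ∈ SAs A (j + m) := ih (add_mem_add hy hz)
    have h2 : (y + z) + b ∈ SAs A (j + m) + nA A := add_mem_add this hb
    rw [show j + (m + 1) = (j + m) + 1 from rfl, SAs]
    rwa [add_assoc] at h2

lemma SA_nsmul_mem {A : Subgroup Rˣ} {x : R} {j : ℕ} (hx : x ∈ SAs A j) :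
    ∀ k, (k + 1) • x ∈ SAs A ((k + 1) * j) := by
  intro k
  induction k with
  | zero => simpa using hx
  | succ m ih =>
    have : ((m+1) • x) + x ∈ SAs A ((m+1)*j) + SAs A j := add_mem_add ih hx
    have h2 := SA_add_subset A ((m+1)*j) j this
    rw [← succ_nsmul] at h2
    rwa [show (m + 1 + 1) * j = (m+1)*j + j by ring]

lemma SA_repr {A : Subgroup Rˣ} :
    ∀ k, ∀ x ∈ SAs A k, ∃ f : Fin k → A, (∑ i, ((f i : Rˣ) : R)) = x := by
  intro k
  induction k with
  | zero =>
    intro x hx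
    rw [SAs, mem_singleton] at hx
    exact ⟨fun i => i.elim0, by simp [hx]⟩
  | succ m ih =>
    intro x hx
    obtain ⟨y, hy, a, ha, rfl⟩ := mem_add.mp hx
    obtain ⟨f, hf⟩ := ih y hy
    obtain ⟨v, hv, hva⟩ := mem_nA.mp ha
    refine ⟨Fin.snoc f ⟨v, hv⟩, ?_⟩
    rw [Fin.sum_univ_castSucc]
    simp only [Fin.snoc_castSucc, Fin.snoc_last]
    rw [hf, hva]

lemma one_smul_mem_SA (A : Subgroup Rˣ) : ∀ k, (k + 1) • (1 : R) ∈ SAs A (k + 1) := by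
  intro k
  induction k with
  | zero =>
    have : (0:R) + 1 ∈ SAs A 0 + nA A := add_mem_add (mem_singleton_self 0) (one_mem_nA A)
    rw [zero_add, one_smul]
    exact (by simpa using this : (1:R) ∈ SAs A 0 + nA A)
  | succ m ih =>
    have : ((m+1) • (1:R)) + 1 ∈ SAs A (m+1) + nA A := add_mem_add ih (one_mem_nA A)
    rwa [← succ_nsmul] at this


/-- balls -/
noncomputable def Bs (A : Subgroup Rˣ) : ℕ → Finset R
  | 0 => {0}
  | (k+1) => gam (nA A) (Bs A k)

lemma B_succ (A : Subgroup Rˣ) (k : ℕ) :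
    Bs A (k+1) = Bs A k ∪ (Bs A k + nA A) := rfl

lemma B_subset_succ (A : Subgroup Rˣ) (k : ℕ) : Bs A k ⊆ Bs A (k+1) :=
  subset_gam _ _

lemma mem_B_iff {A : Subgroup Rˣ} : ∀ {k : ℕ} {x : R},
    x ∈ Bs A k ↔ ∃ j, j ≤ k ∧ x ∈ SAs A j := by
  intro k
  induction k with
  | zero =>
    intro x
    constructor
    · intro hx; exact ⟨0, le_refl 0, hx⟩
    · rintro ⟨j, hj, hx⟩
      rwa [Nat.le_zero.mp hj] at hx
  | succ m ih =>
    intro x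
    rw [B_succ, mem_union]
    constructor
    · rintro (hx | hx)
      · obtain ⟨j, hj, hx⟩ := ih.mp hx
        exact ⟨j, hj.trans (Nat.le_succ m), hx⟩
      · obtain ⟨y, hy, a, ha, rfl⟩ := mem_add.mp hx
        obtain ⟨j, hj, hy⟩ := ih.mp hy
        exact ⟨j + 1, Nat.succ_le_succ hj, add_mem_add hy ha⟩
    · rintro ⟨j, hj, hx⟩
      rcases Nat.lt_or_ge j (m+1) with h | h
      · exact Or.inl (ih.mpr ⟨j, Nat.lt_succ_iff.mp h, hx⟩)
      · have hjm : j = m + 1 := le_antisymm hj h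
        subst hjm
        obtain ⟨y, hy, a, ha, rfl⟩ := mem_add.mp hx
        exact Or.inr (add_mem_add (ih.mpr ⟨m, le_refl m, hy⟩) ha)

lemma SA_subset_B (A : Subgroup Rˣ) (k : ℕ) : SAs A k ⊆ Bs A k :=
  fun x hx => mem_B_iff.mpr ⟨k, le_refl k, hx⟩

lemma B_stab (A : Subgroup Rˣ) {k : ℕ} (h : Bs A (k+1) = Bs A k) :
    ∀ m, Bs A (k + m) = Bs A k := by
  intro m
  induction m with
  | zero => rfl
  | succ j ih =>
    have : Bs A (k + j + 1) = gam (nA A) (Bs A (k + j)) := rfl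
    rw [show k + (j+1) = (k + j) + 1 from rfl, this, ih]
    exact h

/-- the reachable set -/
noncomputable def Vv (A : Subgroup Rˣ) : Finset R := Bs A (Fintype.card R)

lemma B_V_stab (A : Subgroup Rˣ) : Bs A (Fintype.card R + 1) = Bs A (Fintype.card R) := by
  by_contra hne
  -- then the chain is strictly increasing up to card R
  have hstrict : ∀ k ≤ Fintype.card R, k + 1 ≤ (Bs A k).card := by
    intro k
    induction k with
    | zero => intro _; simp [Bs]
    | succ m ih =>
      intro hm
      have h1 : m + 1 ≤ (Bs A m).card := ih (Nat.le_of_succ_le hm)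
      have hneq : Bs A (m+1) ≠ Bs A m := by
        intro he
        apply hne
        have h2 := B_stab A he (Fintype.card R - m)
        have h3 := B_stab A he (Fintype.card R + 1 - m)
        rw [show m + (Fintype.card R - m) = Fintype.card R by omega] at h2
        rw [show m + (Fintype.card R + 1 - m) = Fintype.card R + 1 by omega] at h3
        rw [h2, h3]
      have hss : Bs A m ⊂ Bs A (m+1) :=
        (ssubset_iff_of_subset (B_subset_succ A m)).mpr
          (by by_contra hc; push_neg at hc
              exact hneq (subset_antisymm (fun x hx => by
                by_contra hxx
                exact hxx (by have := hc x; tauto)) (B_subset_succ A m)))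
      have := Finset.card_lt_card hss
      omega
  have := hstrict (Fintype.card R) (le_refl _)
  have hle := Finset.card_le_univ (Bs A (Fintype.card R))
  omega

lemma B_ge_V (A : Subgroup Rˣ) (m : ℕ) :
    Bs A (Fintype.card R + m) = Vv A := B_stab A (B_V_stab A) m

lemma B_subset_V (A : Subgroup Rˣ) : ∀ k, Bs A k ⊆ Vv A := by
  intro k
  rcases Nat.le_total k (Fintype.card R) with h | h
  · intro x hx
    obtain ⟨j, hj, hx⟩ := mem_B_iff.mp hx
    exact mem_B_iff.mpr ⟨j, hj.trans h, hx⟩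
  · rw [show k = Fintype.card R + (k - Fintype.card R) by omega, B_ge_V]

lemma SA_subset_V (A : Subgroup Rˣ) (k : ℕ) : SAs A k ⊆ Vv A :=
  (SA_subset_B A k).trans (B_subset_V A k)

lemma V_zero_mem (A : Subgroup Rˣ) : (0 : R) ∈ Vv A :=
  B_subset_V A 0 (mem_singleton_self 0)

lemma nA_subset_V (A : Subgroup Rˣ) : nA A ⊆ Vv A := by
  intro x hx
  exact SA_subset_V A 1 (by
    have : (0:R) + x ∈ SAs A 0 + nA A := add_mem_add (mem_singleton_self 0) hx
    exact (by simpa using this : x ∈ SAs A 0 + nA A))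

lemma gam_V (A : Subgroup Rˣ) : gam (nA A) (Vv A) = Vv A := by
  have : gam (nA A) (Vv A) = Bs A (Fintype.card R + 1) := rfl
  rw [this, B_V_stab]
  rfl

lemma V_add_nA (A : Subgroup Rˣ) : Vv A + nA A ⊆ Vv A := by
  intro x hx
  have : x ∈ gam (nA A) (Vv A) := mem_union_right _ hx
  rwa [gam_V] at this

lemma V_add_V (A : Subgroup Rˣ) : Vv A + Vv A ⊆ Vv A := by
  intro x hx
  obtain ⟨y, hy, z, hz, rfl⟩ := mem_add.mp hx
  obtain ⟨j, hj, hy⟩ := mem_B_iff.mp hy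
  obtain ⟨i, hi, hz⟩ := mem_B_iff.mp hz
  have := SA_add_subset A j i (add_mem_add hy hz)
  exact SA_subset_V A (j+i) this

lemma V_neg (A : Subgroup Rˣ) : ∀ x ∈ Vv A, -x ∈ Vv A := by
  intro x hx
  obtain ⟨j, hj, hx⟩ := mem_B_iff.mp hx
  rcases Nat.eq_zero_or_pos (addOrderOf x) with h0 | hpos
  · exfalso; exact (addOrderOf_pos x).ne' h0
  rcases Nat.lt_or_ge (addOrderOf x) 2 with h | h
  · have h1 : addOrderOf x = 1 := by omega
    have hx0 : x = 0 := AddMonoid.addOrderOf_eq_one_iff.mp h1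
    rw [hx0, neg_zero]
    exact V_zero_mem A
  · obtain ⟨m, hm⟩ : ∃ m : ℕ, addOrderOf x = m + 2 := ⟨addOrderOf x - 2, by omega⟩
    have h0 : addOrderOf x • x = 0 := addOrderOf_nsmul_eq_zero x
    have hsum : (m + 1) • x + x = 0 := by rw [← succ_nsmul, ← hm, h0]
    have hneg : (m + 1) • x = -x := eq_neg_of_add_eq_zero_left hsum
    rw [← hneg]
    exact SA_subset_V A _ (SA_nsmul_mem hx m)

/-- the multiplication-by-a-unit automorphism -/
noncomputable def eU (u : Rˣ) : R ≃+ R := DistribMulAction.toAddAut Rˣ R u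

lemma eU_apply (u : Rˣ) (x : R) : eU u x = (u : R) * x := rfl

lemma image_eU_of_closed {u : Rˣ} {X : Finset R}
    (h : ∀ x ∈ X, (u : R) * x ∈ X) : X.image (eU u) = X := by
  apply Finset.eq_of_subset_of_card_le
  · intro x hx
    obtain ⟨y, hy, rfl⟩ := Finset.mem_image.mp hx
    exact h y hy
  · rw [Finset.card_image_of_injective _ (eU u).injective]

lemma nA_image_eU {A : Subgroup Rˣ} {u : Rˣ} (hu : u ∈ A) :
    (nA A).image (eU u) = nA A :=
  image_eU_of_closed (fun x hx => mul_mem_nA hu hx)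

lemma V_image_eU {A : Subgroup Rˣ} {u : Rˣ} (hu : u ∈ A) :
    (Vv A).image (eU u) = Vv A := by
  apply image_eU_of_closed
  intro x hx
  obtain ⟨j, hj, hx⟩ := mem_B_iff.mp hx
  exact SA_subset_V A j (SA_mul_mem hu j x hx)


theorem main (A : Subgroup Rˣ) :
    ∃ t : ℕ, 0 < t ∧ t ≤ (Fintype.card R + Nat.card A - 1) / Nat.card A ∧
      ∃ a : Fin t → A, (∑ i, ((a i : Rˣ) : R)) = 0 := by
  have hApos : 0 < Nat.card A := Nat.card_pos
  rcases subsingleton_or_nontrivial R with hsub | hnt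
  · refine ⟨1, one_pos, ?_, fun _ => 1, Subsingleton.elim _ _⟩
    have h1 : Fintype.card R = 1 := Fintype.card_eq_one_iff.mpr ⟨0, fun y => Subsingleton.elim y 0⟩
    rw [h1, Nat.add_sub_cancel_left, Nat.div_self hApos]
  · set n := Nat.card A with hndef
    have hn : (nA A).card = n := card_nA A
    have hnpos : 0 < n := hApos
    have hex : ∃ k, (0:R) ∈ SAs A (k + 1) := by
      have hm : 0 < addOrderOf (1:R) := addOrderOf_pos 1
      refine ⟨addOrderOf (1:R) - 1, ?_⟩
      rw [show addOrderOf (1:R) - 1 + 1 = addOrderOf (1:R) by omega]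
      have h2 := one_smul_mem_SA A (addOrderOf (1:R) - 1)
      rw [show addOrderOf (1:R) - 1 + 1 = addOrderOf (1:R) by omega] at h2
      rwa [addOrderOf_nsmul_eq_zero (1:R)] at h2
    set T := Nat.find hex + 1 with hTdef
    have hT0 : (0:R) ∈ SAs A T := Nat.find_spec hex
    have hmin : ∀ j, 1 ≤ j → j < T → (0:R) ∉ SAs A j := by
      intro j h1 h2 hmem
      have hlt : j - 1 < Nat.find hex := by omega
      exact Nat.find_min hex hlt (by rwa [show j - 1 + 1 = j by omega])
    have hT2 : 2 ≤ T := by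
      by_contra h
      have hT1 : T = 1 := by omega
      rw [hT1] at hT0
      have h01 : (0:R) ∈ SAs A 0 + nA A := hT0
      obtain ⟨y, hy, a, ha, hya⟩ := mem_add.mp h01
      rw [SAs, mem_singleton] at hy
      rw [hy, zero_add] at hya
      rw [hya] at ha
      exact zero_not_mem_nA A ha
    obtain ⟨m, hm⟩ : ∃ m, T = m + 2 := ⟨T - 2, by omega⟩
    have hnegA : ∀ a ∈ nA A, -a ∈ SAs A (m + 1) := by
      intro a ha
      have h0 : (0:R) ∈ SAs A (m+1) + nA A := by
        have hh : SAs A (m + 2) = SAs A (m+1) + nA A := rfl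
        rw [← hh, ← hm]
        exact hT0
      obtain ⟨y, hy, c, hc, hyc⟩ := mem_add.mp h0
      have hyneg : y = -c := eq_neg_of_add_eq_zero_left hyc
      obtain ⟨v, hv, hvc⟩ := mem_nA.mp hc
      obtain ⟨u, hu, hua⟩ := mem_nA.mp ha
      have hmul : ((u * v⁻¹ : Rˣ) : R) * y ∈ SAs A (m+1) :=
        SA_mul_mem (A.mul_mem hu (A.inv_mem hv)) _ y hy
      have heq : ((u * v⁻¹ : Rˣ) : R) * y = -a := by
        rw [hyneg, ← hvc, ← hua]
        push_cast
        have hvv : ((v⁻¹ : Rˣ) : R) * ((v : Rˣ) : R) = 1 := by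
          rw [← Units.val_mul, inv_mul_cancel, Units.val_one]
        calc (u : R) * ((v⁻¹:Rˣ):R) * -((v:Rˣ):R)
            = -((u:R) * (((v⁻¹:Rˣ):R) * ((v:Rˣ):R))) := by ring
          _ = -(u:R) := by rw [hvv, mul_one]
      rwa [heq] at hmul
    have hnegA_not : ∀ a ∈ nA A, ∀ j, j ≤ m → -a ∉ SAs A j := by
      intro a ha j hj hmem
      rcases Nat.eq_zero_or_pos j with rfl | hjpos
      · rw [SAs, mem_singleton, neg_eq_zero] at hmem
        rw [hmem] at ha
        exact zero_not_mem_nA A ha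
      · have h0 : (0:R) ∈ SAs A (j + 1) := by
          have h2 := add_mem_add hmem ha
          rwa [neg_add_cancel] at h2
        exact hmin (j+1) (by omega) (by omega) h0
    have hBneV : ∀ k, k ≤ m → Bs A k ≠ Vv A := by
      intro k hk he
      have h1 : -(1:R) ∈ Vv A := SA_subset_V A (m+1) (hnegA 1 (one_mem_nA A))
      rw [← he] at h1
      obtain ⟨j, hj, h1⟩ := mem_B_iff.mp h1
      exact hnegA_not 1 (one_mem_nA A) j (hj.trans hk) h1
    have hfragB : ∀ k, k + 1 ≤ m → IsFrag (Vv A) (nA A) (Bs A k) := by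
      intro k hk
      refine ⟨⟨0, ?_⟩, B_subset_V A k, ?_⟩
      · exact mem_B_iff.mpr ⟨0, Nat.zero_le k, mem_singleton_self 0⟩
      · have hgb : gam (nA A) (Bs A k) = Bs A (k+1) := rfl
        rw [hgb]
        exact hBneV (k+1) hk
    have hkapn : 1 ≤ m → n ≤ kap (Vv A) (nA A) := by
      intro hm1
      have hfr : ∃ Z, IsFrag (Vv A) (nA A) Z := ⟨Bs A 0, hfragB 0 hm1⟩
      set E : Set (R ≃+ R) := {e | ∃ u : Rˣ, ∃ _ : u ∈ A, e = eU u} with hEdef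
      have hE_S : ∀ e ∈ E, (nA A).image ⇑e = nA A := by
        rintro e ⟨u, hu, rfl⟩
        exact nA_image_eU hu
      have hE_V : ∀ e ∈ E, (Vv A).image ⇑e = Vv A := by
        rintro e ⟨u, hu, rfl⟩
        exact V_image_eU hu
      rcases abstract_main E (V_zero_mem A) (V_add_V A) (V_neg A) (nA_subset_V A)
          hE_S hE_V hfr with hk | ⟨H, hHV, h0H, hcl, hinv, hmeet, hHne⟩
      · rwa [hn] at hk
      · exfalso
        obtain ⟨a₀, ha₀⟩ := hmeet
        have ha₀H : a₀ ∈ H := (mem_inter.mp ha₀).1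
        have hb : ∃ b : Rˣ, b ∈ A ∧ (b : R) ∈ H := by
          rcases mem_union.mp (mem_inter.mp ha₀).2 with h | h
          · obtain ⟨u, hu, hux⟩ := mem_nA.mp h
            exact ⟨u, hu, hux ▸ ha₀H⟩
          · obtain ⟨s, hs, hneg⟩ := mem_neg.mp h
            obtain ⟨u, hu, hus⟩ := mem_nA.mp hs
            have hna : -a₀ ∈ H := negmem_of_addclosed hcl ha₀H
            refine ⟨u, hu, ?_⟩
            have hs' : s = -a₀ := by rw [← hneg, neg_neg]
            rw [hus, hs']
            exact hna
        obtain ⟨b, hbA, hbH⟩ := hb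
        have hspan : ∀ j, ∀ x ∈ SAs A j, x * (b:R) ∈ H := by
          intro j
          induction j with
          | zero =>
            intro x hx
            rw [SAs, mem_singleton] at hx
            rw [hx, zero_mul]
            exact h0H
          | succ i ih =>
            intro x hx
            obtain ⟨y, hy, a, ha, rfl⟩ := mem_add.mp hx
            rw [add_mul]
            refine hcl _ (ih y hy) _ ?_
            obtain ⟨u, hu, rfl⟩ := mem_nA.mp ha
            have hmemE : eU u ∈ E := ⟨u, hu, rfl⟩
            have h3 : (eU u) ((b:Rˣ):R) ∈ H.image ⇑(eU u) :=
              Finset.mem_image.mpr ⟨((b:Rˣ):R), hbH, rfl⟩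
            rwa [hinv _ hmemE] at h3
        have hinj : Function.Injective (fun x : R => x * ((b:Rˣ):R)) := by
          intro x y hxy
          have h2 := congrArg (fun z => z * ((b⁻¹ : Rˣ) : R)) hxy
          have hbb : ((b : Rˣ) : R) * ((b⁻¹ : Rˣ) : R) = 1 := by
            rw [← Units.val_mul, mul_inv_cancel, Units.val_one]
          simpa [mul_assoc, hbb] using h2
        have hVb : (Vv A).image (fun x => x * ((b:Rˣ):R)) ⊆ H := by
          intro x hx
          obtain ⟨y, hy, rfl⟩ := Finset.mem_image.mp hx
          obtain ⟨j, hj, hy⟩ := mem_B_iff.mp hy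
          exact hspan j y hy
        have hcard : (Vv A).card ≤ H.card := by
          calc (Vv A).card = ((Vv A).image (fun x => x * ((b:Rˣ):R))).card :=
                (Finset.card_image_of_injective _ hinj).symm
            _ ≤ H.card := card_le_card hVb
        exact hHne (Finset.eq_of_subset_of_card_le hHV hcard)
    have hcount : ∀ k, k ≤ m → 1 + k * n ≤ (Bs A k).card := by
      intro k
      induction k with
      | zero => intro _; simp [Bs]
      | succ j ih =>
        intro hj
        have h1 := ih (Nat.le_of_succ_le hj)
        have hgam : (Bs A (j+1)).card = (Bs A j).card + bnd (nA A) (Bs A j) :=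
          card_gam (nA A) (Bs A j)
        rcases Nat.eq_zero_or_pos j with rfl | hjpos
        · have hB1 : Bs A 1 = ({0} : Finset R) ∪ (({0} : Finset R) + nA A) := rfl
          have h01 : ({0} : Finset R) + nA A = nA A := by
            ext x
            simp [Finset.singleton_add]
          rw [hB1, h01]
          have hdisj : Disjoint ({0} : Finset R) (nA A) := by
            rw [Finset.disjoint_singleton_left]
            exact zero_not_mem_nA A
          rw [Finset.card_union_of_disjoint hdisj, Finset.card_singleton, hn]
          omega
        · have hfrag := hfragB j hj
          have hkb := kap_le hfrag
          have hkapn' := hkapn (by omega)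
          have hmul : (j+1)*n = j*n + n := by ring
          omega
    have hlast : (Bs A m).card + n ≤ (Bs A (m+1)).card := by
      have hsub : Bs A m ∪ (nA A).image Neg.neg ⊆ Bs A (m+1) := by
        apply union_subset (B_subset_succ A m)
        intro x hx
        obtain ⟨a, ha, rfl⟩ := Finset.mem_image.mp hx
        exact SA_subset_B A (m+1) (hnegA a ha)
      have hdisj : Disjoint (Bs A m) ((nA A).image Neg.neg) := by
        rw [Finset.disjoint_right]
        intro x hx hxB
        obtain ⟨a, ha, rfl⟩ := Finset.mem_image.mp hx
        obtain ⟨j, hj, hxB⟩ := mem_B_iff.mp hxB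
        exact hnegA_not a ha j hj hxB
      calc (Bs A m).card + n
          = (Bs A m).card + ((nA A).image Neg.neg).card := by
            rw [Finset.card_image_of_injective _ neg_injective, hn]
        _ = (Bs A m ∪ (nA A).image Neg.neg).card :=
            (Finset.card_union_of_disjoint hdisj).symm
        _ ≤ (Bs A (m+1)).card := card_le_card hsub
    have htotal : 1 + m * n + n ≤ (Bs A (m+1)).card := by
      have h4 := hcount m (le_refl m)
      omega
    have hboundN : (Bs A (m+1)).card ≤ Fintype.card R := Finset.card_le_univ _
    refine ⟨T, by omega, ?_, ?_⟩
    · rw [Nat.le_div_iff_mul_le hnpos]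
      have hTn : T * n = m * n + n + n := by rw [hm]; ring
      have hNpos : 0 < Fintype.card R := Fintype.card_pos
      omega
    · exact SA_repr T 0 hT0

end ZeroSumRing


theorem stmt_1 (R : Type*) [CommRing R] [Fintype R] (A : Subgroup Rˣ) :
    ∃ t : ℕ, 0 < t ∧ t ≤ (Fintype.card R + Nat.card A - 1) / Nat.card A ∧
      ∃ a : Fin t → A, (∑ i, ((a i : Rˣ) : R)) = 0 := by
  exact ZeroSumRing.main A
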